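/- Let p be a prime and n a positive integer. If the value Φ_n(p) of the n-th cyclotomic polynomial at p is a power of 2 (where 1 = 2⁰ counts as a power of 2), then either n = 1 and p is 2 or a Fermat prime, or n = 2 and p is a Mersenne prime. -/

import Mathlib

lemma fermat_aux {k : ℕ} (hk : 0 < k) (hp : (2 ^ k + 1).Prime) :
    ∃ m : ℕ, 2 ^ k + 1 = 2 ^ 2 ^ m + 1 := by
  set m := k.factorization 2 with hm
  have hodd : Odd (k / 2 ^ m) := by
    have h2 := Nat.not_dvd_ordCompl Nat.prime_two hk.ne'
    rcases Nat.even_or_odd (k / 2 ^ m) with he | ho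
    · exact absurd he.two_dvd h2
    · exact ho
  have hke : 2 ^ m * (k / 2 ^ m) = k := Nat.ordProj_mul_ordCompl_eq_self k 2
  have hdvd : 2 ^ 2 ^ m + 1 ∣ 2 ^ k + 1 := by
    have h := Odd.nat_add_dvd_pow_add_pow (2 ^ 2 ^ m) 1 hodd
    rwa [one_pow, ← pow_mul, hke] at h
  have h1 := hp.eq_one_or_self_of_dvd _ hdvd
  have h2 : 0 < 2 ^ 2 ^ m := pow_pos (by norm_num) _
  exact ⟨m, by omega⟩

lemma mersenne_aux {k : ℕ} (hk : 2 ≤ k) (hp : (2 ^ k - 1).Prime) : k.Prime := by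
  rw [Nat.prime_def]
  refine ⟨hk, fun d hd => ?_⟩
  have hd0 : d ≠ 0 := by rintro rfl; simp at hd; omega
  have hdvd : 2 ^ d - 1 ∣ 2 ^ k - 1 := by
    have h := Nat.sub_dvd_pow_sub_pow (2 ^ d) 1 (k / d)
    rwa [one_pow, ← pow_mul, Nat.mul_div_cancel' hd] at h
  have h1 := hp.eq_one_or_self_of_dvd _ hdvd
  have hinj : Function.Injective (2 ^ · : ℕ → ℕ) := Nat.pow_right_injective le_rfl
  have h2 : 1 ≤ 2 ^ d := Nat.one_le_two_pow
  have h3 : 1 ≤ 2 ^ k := Nat.one_le_two_pow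
  rcases h1 with h | h
  · left
    have : (2 : ℕ) ^ d = 2 ^ 1 := by omega
    exact hinj this
  · right
    have : (2 : ℕ) ^ d = 2 ^ k := by omega
    exact hinj this

/-- If `p` is a prime, `n ≥ 1`, and the value `Φ_n(p)` of the `n`-th cyclotomic polynomial
at `p` is a power of 2, then either `n = 1` and `p` is 2 or a Fermat prime, or `n = 2` and
`p` is a Mersenne prime. -/
theorem cyclotomic_eval_prime_two_pow
    (p n : ℕ) (hp : p.Prime) (hn : 0 < n)
    (h : ∃ k : ℕ, (Polynomial.cyclotomic n ℤ).eval (p : ℤ) = 2 ^ k) :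
    (n = 1 ∧ (p = 2 ∨ ∃ m : ℕ, p = 2 ^ 2 ^ m + 1)) ∨
      (n = 2 ∧ ∃ m : ℕ, m.Prime ∧ p = 2 ^ m - 1) := by
  obtain ⟨k, hk⟩ := h
  have hp2 : 2 ≤ p := hp.two_le
  rcases Nat.eq_zero_or_pos k with rfl | hkpos
  · -- Φ_n(p) = 1, forces n = 1 and p = 2
    rw [pow_zero] at hk
    rcases eq_or_lt_of_le (show 1 ≤ n from hn) with h1 | h1
    · -- n = 1
      rw [← h1, Polynomial.cyclotomic_one, Polynomial.eval_sub, Polynomial.eval_X,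
        Polynomial.eval_one] at hk
      have hpe : p = 2 := by
        have : (p : ℤ) = 2 := by omega
        exact_mod_cast this
      exact Or.inl ⟨h1.symm, Or.inl hpe⟩
    · exfalso
      have hb := Polynomial.sub_one_lt_natAbs_cyclotomic_eval h1 (by omega : p ≠ 1)
      rw [hk] at hb
      simp at hb
      omega
  · -- k ≥ 1: 2 divides Φ_n(p)
    have h2dvd : (2 : ℤ) ∣ (Polynomial.cyclotomic n ℤ).eval (p : ℤ) := by
      rw [hk]; exact dvd_pow_self 2 hkpos.ne'
    -- p is odd
    have hpodd : p ≠ 2 := by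
      rintro rfl
      have hdvd1 : (Polynomial.cyclotomic n ℤ).eval ((2 : ℕ) : ℤ) ∣ (2 : ℤ) ^ n - 1 := by
        have := Polynomial.eval_dvd (p := Polynomial.cyclotomic n ℤ)
          (q := Polynomial.X ^ n - 1) (x := ((2 : ℕ) : ℤ))
          (Polynomial.cyclotomic.dvd_X_pow_sub_one n ℤ)
        simpa using this
      have h2 : (2 : ℤ) ∣ (2 : ℤ) ^ n - 1 := h2dvd.trans hdvd1
      have h3 : (2 : ℤ) ∣ (2 : ℤ) ^ n := dvd_pow_self 2 hn.ne'
      omega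
    have hpodd' : Odd p := hp.odd_of_ne_two hpodd
    have hp3 : 3 ≤ p := by
      rcases hpodd' with ⟨t, ht⟩; omega
    -- 2 ∣ Φ_n(1)
    have hcong : (2 : ℤ) ∣ (Polynomial.cyclotomic n ℤ).eval 1 := by
      have hsub : ((p : ℤ) - 1) ∣ (Polynomial.cyclotomic n ℤ).eval (p : ℤ) -
          (Polynomial.cyclotomic n ℤ).eval 1 := Polynomial.sub_dvd_eval_sub _ _ _
      have h21 : (2 : ℤ) ∣ (p : ℤ) - 1 := by
        obtain ⟨t, ht⟩ := hpodd'
        refine ⟨(t : ℤ), ?_⟩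
        have hc : (p : ℤ) = 2 * (t : ℤ) + 1 := by exact_mod_cast ht
        omega
      have := (h21.trans hsub)
      omega
    rcases eq_or_lt_of_le (show 1 ≤ n from hn) with h1 | h1
    · -- n = 1 : p - 1 = 2^k, Fermat prime
      left
      rw [← h1, Polynomial.cyclotomic_one, Polynomial.eval_sub, Polynomial.eval_X,
        Polynomial.eval_one] at hk
      have hpk : p = 2 ^ k + 1 := by
        have h2k : (0 : ℤ) < 2 ^ k := by positivity
        have h : (p : ℤ) = ((2 ^ k + 1 : ℕ) : ℤ) := by push_cast; omega
        exact_mod_cast h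
      refine ⟨h1.symm, Or.inr ?_⟩
      obtain ⟨m, hm⟩ := fermat_aux hkpos (hpk ▸ hp)
      exact ⟨m, by omega⟩
    · -- n ≥ 2
      by_cases hpp : IsPrimePow n
      · obtain ⟨q, a, hq, ha, rfl⟩ := (isPrimePow_nat_iff _).1 hpp
        obtain ⟨a, rfl⟩ := Nat.exists_eq_add_of_lt ha
        rw [zero_add] at *
        haveI : Fact q.Prime := ⟨hq⟩
        have he1 : (Polynomial.cyclotomic (q ^ (a + 1)) ℤ).eval 1 = q :=
          Polynomial.eval_one_cyclotomic_prime_pow a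
        rw [he1] at hcong
        have hq2 : q = 2 := by
          have := (Int.natCast_dvd_natCast (m := 2) (n := q)).1 (by exact_mod_cast hcong)
          exact ((Nat.prime_dvd_prime_iff_eq Nat.prime_two hq).1 this).symm
        subst hq2
        rcases Nat.eq_zero_or_pos a with rfl | hapos
        · -- n = 2 : Mersenne
          right
          rw [pow_one] at *
          rw [Polynomial.cyclotomic_two, Polynomial.eval_add, Polynomial.eval_X,
            Polynomial.eval_one] at hk
          have hpk : p + 1 = 2 ^ k := by
            have h : ((p + 1 : ℕ) : ℤ) = ((2 ^ k : ℕ) : ℤ) := by push_cast; omega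
            exact_mod_cast h
          have hk2 : 2 ≤ k := by
            have : (2:ℕ) ^ 1 < 2 ^ k := by omega
            exact (Nat.pow_lt_pow_iff_right (le_refl 2)).1 this
          have hpm : p = 2 ^ k - 1 := by omega
          exact ⟨rfl, k, mersenne_aux hk2 (hpm ▸ hp), hpm⟩
        · -- n = 2^(a+1), a ≥ 1 : contradiction mod 4
          exfalso
          obtain ⟨b, rfl⟩ := Nat.exists_eq_add_of_lt hapos
          rw [zero_add] at *
          have hcyc : Polynomial.cyclotomic (2 ^ (b + 1 + 1)) ℤ =
              Polynomial.X ^ 2 ^ (b + 1) + 1 := by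
            rw [Polynomial.cyclotomic_prime_pow_eq_geom_sum Nat.prime_two]
            simp [Finset.sum_range_succ, add_comm]
          rw [hcyc] at hk
          simp only [Polynomial.eval_add, Polynomial.eval_pow, Polynomial.eval_X,
            Polynomial.eval_one] at hk
          -- p^(2^(b+1)) + 1 = 2^k with p odd
          have hM : (p : ℤ) ^ 2 ^ (b + 1) = ((p ^ 2 ^ b : ℕ) : ℤ) ^ 2 := by
            push_cast
            rw [← pow_mul, pow_succ]
          set M : ℕ := p ^ 2 ^ b with hMdef
          have hMeq : (M : ℕ) ^ 2 + 1 = 2 ^ k := by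
            have h : ((M ^ 2 + 1 : ℕ) : ℤ) = ((2 ^ k : ℕ) : ℤ) := by
              push_cast [← hM]; omega
            exact_mod_cast h
          have hModd : Odd M := hpodd'.pow
          have hM3 : 3 ≤ M := le_trans hp3 (Nat.le_self_pow (pow_pos (by norm_num : (0:ℕ) < 2) b).ne' p)
          obtain ⟨t, ht⟩ := hModd
          rcases k with _ | _ | k
          · simp at hMeq; omega
          · rw [pow_one] at hMeq; nlinarith
          · have h4 : 2 ^ (k + 2) = 4 * 2 ^ k := by ring
            rw [h4, ht] at hMeq
            have hs : (2 * t + 1) ^ 2 + 1 = 4 * (t * t + t) + 2 := by ring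
            rw [hs] at hMeq
            obtain ⟨s, hsd⟩ : ∃ s, t * t + t = s := ⟨_, rfl⟩
            obtain ⟨e, hse⟩ : ∃ e, (2 : ℕ) ^ k = e := ⟨_, rfl⟩
            rw [hsd, hse] at hMeq
            have he1 : 1 ≤ e := hse ▸ Nat.one_le_two_pow
            omega
      · -- n not a prime power and n > 1: Φ_n(1) = 1, contradiction
        exfalso
        have hnp : ∀ {q : ℕ}, q.Prime → ∀ a : ℕ, q ^ a ≠ n := by
          intro q hq a hqa
          rcases Nat.eq_zero_or_pos a with rfl | hapos
          · rw [pow_zero] at hqa; omega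
          · exact hpp ((isPrimePow_nat_iff n).2 ⟨q, a, hq, hapos, hqa⟩)
        rw [Polynomial.eval_one_cyclotomic_not_prime_pow hnp] at hcong
        omega
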